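/- For all vectors a, b ∈ ℝⁿ and every real l ≥ 2, the inequality |a − b|ˡ ≤ 2^{l−2} (|a|^{l−2} a − |b|^{l−2} b) · (a − b) holds, where · denotes the Euclidean inner product and |·| the Euclidean norm. -/

import Mathlib

set_option maxHeartbeats 800000

lemma mean2 {x y q : ℝ} (hx : 0 ≤ x) (hy : 0 ≤ y) (hq : 1 ≤ q) :
    (x + y) ^ q ≤ 2 ^ (q - 1) * (x ^ q + y ^ q) := by
  lift x to NNReal using hx
  lift y to NNReal using hy
  have h := NNReal.rpow_add_le_mul_rpow_add_rpow x y hq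
  exact_mod_cast h

lemma rpow_mul_self {x : ℝ} (hx : 0 ≤ x) (p : ℝ) (hp : 0 < p + 1) :
    x ^ p * x = x ^ (p + 1) := by
  rcases eq_or_lt_of_le hx with h | h
  · rw [← h, Real.zero_rpow (ne_of_gt hp), mul_zero]
  · rw [Real.rpow_add_one (ne_of_gt h)]

lemma key (l x y d : ℝ) (hl : 2 ≤ l) (hx : 0 ≤ x) (hy : 0 ≤ y) (hd0 : 0 ≤ d)
    (hd : d ≤ x + y) :
    d ^ l ≤ 2 ^ (l - 2) *
      ((x ^ (l-2) * (x^2 - y^2 + d^2) + y ^ (l-2) * (y^2 - x^2 + d^2)) / 2) := by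
  have hl2 : (0:ℝ) ≤ l - 2 := by linarith
  have hs0 : 0 ≤ x ^ (l-2) := Real.rpow_nonneg hx _
  have ht0 : 0 ≤ y ^ (l-2) := Real.rpow_nonneg hy _
  have hA : 0 ≤ (x ^ (l-2) - y ^ (l-2)) * (x^2 - y^2) := by
    rcases le_total x y with h | h
    · have h1 : x ^ (l-2) ≤ y ^ (l-2) := Real.rpow_le_rpow hx h hl2
      have h2 : x^2 ≤ y^2 := by nlinarith
      nlinarith [mul_nonneg (sub_nonneg.2 h1) (sub_nonneg.2 h2)]
    · have h1 : y ^ (l-2) ≤ x ^ (l-2) := Real.rpow_le_rpow hy h hl2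
      have h2 : y^2 ≤ x^2 := by nlinarith
      nlinarith [mul_nonneg (sub_nonneg.2 h1) (sub_nonneg.2 h2)]
  have hsx : x ^ (l-2) * x = x ^ (l-1) := by
    have := rpow_mul_self hx (l-2) (by linarith)
    rwa [show l - 2 + 1 = l - 1 by ring] at this
  have hty : y ^ (l-2) * y = y ^ (l-1) := by
    have := rpow_mul_self hy (l-2) (by linarith)
    rwa [show l - 2 + 1 = l - 1 by ring] at this
  have h2p : (0:ℝ) < 2 ^ (l-2) := Real.rpow_pos_of_pos (by norm_num) _
  have h2p' : (0:ℝ) < 2 ^ (2-l) := Real.rpow_pos_of_pos (by norm_num) _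
  have h2mul : (2:ℝ) ^ (l-2) * 2 ^ (2-l) = 1 := by
    rw [← Real.rpow_add (by norm_num), show l - 2 + (2 - l) = 0 by ring, Real.rpow_zero]
  -- d^l ≤ (x+y)^(l-2) * d^2
  have hdl : d ^ l ≤ (x + y) ^ (l-2) * d^2 := by
    have e1 : d ^ l = d ^ (l-2) * d^2 := by
      have e2 : d ^ (l-2) * d = d ^ (l-1) := by
        have := rpow_mul_self hd0 (l-2) (by linarith)
        rwa [show l - 2 + 1 = l - 1 by ring] at this
      have e3 : d ^ (l-1) * d = d ^ l := by
        have := rpow_mul_self hd0 (l-1) (by linarith)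
        rwa [show l - 1 + 1 = l by ring] at this
      rw [sq, ← mul_assoc, e2, e3]
    rw [e1]
    have h4 := Real.rpow_le_rpow hd0 hd hl2
    nlinarith [sq_nonneg d]
  -- endpoint inequality
  have hend : 2 ^ (2-l) * ((x+y) ^ (l-2) * (x+y)^2) ≤
      (x ^ (l-2) - y ^ (l-2)) * (x^2 - y^2) / 2 + (x ^ (l-2) + y ^ (l-2)) / 2 * (x+y)^2 := by
    have hrhs : (x ^ (l-2) - y ^ (l-2)) * (x^2 - y^2) / 2 + (x ^ (l-2) + y ^ (l-2)) / 2 * (x+y)^2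
        = (x + y) * (x ^ (l-2) * x + y ^ (l-2) * y) := by ring
    rw [hrhs, hsx, hty]
    rcases eq_or_lt_of_le (by positivity : (0:ℝ) ≤ x + y) with h | h
    · have hx0 : x = 0 := by linarith
      have hy0 : y = 0 := by linarith
      rw [hx0, hy0]
      norm_num
    · have e1 : (x+y) ^ (l-2) * (x+y)^2 = (x+y) * (x+y) ^ (l-1) := by
        have e2 : (x+y) ^ (l-2) * (x+y) = (x+y) ^ (l-1) := by
          have := rpow_mul_self (le_of_lt h) (l-2) (by linarith)
          rwa [show l - 2 + 1 = l - 1 by ring] at this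
        rw [sq, ← mul_assoc, e2]; ring
      rw [e1]
      have hm := mean2 hx hy (by linarith : 1 ≤ l - 1)
      have hmm : 2 ^ (2-l) * (x+y) ^ (l-1) ≤ x ^ (l-1) + y ^ (l-1) := by
        have h21 : (2:ℝ) ^ (2-l) * 2 ^ (l-1-1) = 1 := by
          rw [← Real.rpow_add (by norm_num), show 2 - l + (l-1-1) = 0 by ring, Real.rpow_zero]
        calc 2 ^ (2-l) * (x+y) ^ (l-1) ≤ 2 ^ (2-l) * (2 ^ (l-1-1) * (x ^ (l-1) + y ^ (l-1))) :=
              mul_le_mul_of_nonneg_left hm (le_of_lt h2p')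
          _ = (2 ^ (2-l) * 2 ^ (l-1-1)) * (x ^ (l-1) + y ^ (l-1)) := by ring
          _ = x ^ (l-1) + y ^ (l-1) := by rw [h21]; ring
      calc 2 ^ (2-l) * ((x+y) * (x+y) ^ (l-1)) = (x+y) * (2 ^ (2-l) * (x+y) ^ (l-1)) := by ring
        _ ≤ (x+y) * (x ^ (l-1) + y ^ (l-1)) := mul_le_mul_of_nonneg_left hmm (le_of_lt h)
  -- main inequality with 2^(2-l)
  have main : 2 ^ (2-l) * d ^ l ≤
      (x ^ (l-2) * (x^2 - y^2 + d^2) + y ^ (l-2) * (y^2 - x^2 + d^2)) / 2 := by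
    have hK0 : 0 ≤ (x+y) ^ (l-2) := Real.rpow_nonneg (by positivity) _
    have hdd : d^2 ≤ (x+y)^2 := by nlinarith
    have hd2 : (0:ℝ) ≤ d^2 := sq_nonneg d
    have h1 : 2 ^ (2-l) * d ^ l ≤ 2 ^ (2-l) * (x+y) ^ (l-2) * d^2 := by
      calc 2 ^ (2-l) * d ^ l ≤ 2 ^ (2-l) * ((x+y) ^ (l-2) * d^2) :=
            mul_le_mul_of_nonneg_left hdl (le_of_lt h2p')
        _ = 2 ^ (2-l) * (x+y) ^ (l-2) * d^2 := by ring
    rcases le_or_gt (2 ^ (2-l) * (x+y) ^ (l-2)) ((x ^ (l-2) + y ^ (l-2)) / 2) with h | h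
    · have h3 : 2 ^ (2-l) * (x+y) ^ (l-2) * d^2 ≤ (x ^ (l-2) + y ^ (l-2)) / 2 * d^2 :=
        mul_le_mul_of_nonneg_right h hd2
      nlinarith
    · have hstep : (2 ^ (2-l) * (x+y) ^ (l-2) - (x ^ (l-2) + y ^ (l-2)) / 2) * d^2 ≤
          (2 ^ (2-l) * (x+y) ^ (l-2) - (x ^ (l-2) + y ^ (l-2)) / 2) * (x+y)^2 :=
        mul_le_mul_of_nonneg_left hdd (by linarith)
      nlinarith
  calc d ^ l = 2 ^ (l-2) * (2 ^ (2-l) * d ^ l) := by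
        rw [← mul_assoc, h2mul, one_mul]
    _ ≤ 2 ^ (l-2) * ((x ^ (l-2) * (x^2 - y^2 + d^2) + y ^ (l-2) * (y^2 - x^2 + d^2)) / 2) :=
        mul_le_mul_of_nonneg_left main (le_of_lt h2p)

theorem stmt4 (n : ℕ) (a b : EuclideanSpace ℝ (Fin n)) (l : ℝ) (hl : 2 ≤ l) :
    ‖a - b‖ ^ l ≤ 2 ^ (l - 2) *
      (inner ℝ ((‖a‖ ^ (l - 2) : ℝ) • a - (‖b‖ ^ (l - 2) : ℝ) • b) (a - b) : ℝ) := by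
  have expand : (inner ℝ ((‖a‖ ^ (l - 2) : ℝ) • a - (‖b‖ ^ (l - 2) : ℝ) • b) (a - b) : ℝ)
      = ‖a‖ ^ (l-2) * (‖a‖^2 - (inner ℝ a b : ℝ)) + ‖b‖ ^ (l-2) * (‖b‖^2 - (inner ℝ a b : ℝ)) := by
    rw [inner_sub_left, inner_sub_right, inner_sub_right, real_inner_smul_left,
      real_inner_smul_left, real_inner_smul_left, real_inner_smul_left,
      real_inner_self_eq_norm_sq, real_inner_self_eq_norm_sq, real_inner_comm b a]
    ring
  have hab : ‖a - b‖^2 = ‖a‖^2 - 2 * (inner ℝ a b : ℝ) + ‖b‖^2 := norm_sub_sq_real a b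
  have hk := key l ‖a‖ ‖b‖ ‖a - b‖ hl (norm_nonneg a) (norm_nonneg b) (norm_nonneg _)
    (norm_sub_le a b)
  rw [expand]
  have heq : ‖a‖ ^ (l-2) * (‖a‖^2 - (inner ℝ a b : ℝ)) + ‖b‖ ^ (l-2) * (‖b‖^2 - (inner ℝ a b : ℝ))
      = (‖a‖ ^ (l-2) * (‖a‖^2 - ‖b‖^2 + ‖a-b‖^2) + ‖b‖ ^ (l-2) * (‖b‖^2 - ‖a‖^2 + ‖a-b‖^2)) / 2 := by
    linear_combination (-(‖a‖ ^ (l-2) + ‖b‖ ^ (l-2)) / 2) * hab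
  rw [heq]
  exact hk
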